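/- Let L > 0, p, n ∈ ℕ with n = p, and x₀ ∈ [0, L/2) such that sin((pπ/L)(L/2 - x₀)) = 0. With q = (L/2 - x₀)/(L/2 + x₀) and Φₚ(x) = √(2/L)·sin((pπ/L)(L/2 - x)), define Υ(x) = -√q·Φₚ(x) on [-L/2, x₀] and (1/√q)·Φₚ(x) on (x₀, L/2]. Then ∫_{-L/2}^{L/2} Υ(x)·Φₚ(x) dx = 0. -/

import Mathlib

open Real MeasureTheory intervalIntegral

theorem stmt_10 (L x₀ : ℝ) (hL : 0 < L) (hx₀ : 0 ≤ x₀) (hx₀' : x₀ < L/2)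
    (q : ℝ) (hq : q = (L/2 - x₀)/(L/2 + x₀))
    (p : ℕ) (hp : 0 < p)
    (Φ : ℝ → ℝ) (hΦ : ∀ x, Φ x = Real.sqrt (2/L) * Real.sin ((p*π/L)*(L/2 - x)))
    (hΦ0 : Real.sin ((p*π/L)*(L/2 - x₀)) = 0)
    (Υ : ℝ → ℝ)
    (hΥ : ∀ x, Υ x = if x ≤ x₀ then -Real.sqrt q * Φ x else (1/Real.sqrt q) * Φ x) :
    (∫ x in (-(L/2))..(L/2), Υ x * Φ x) = 0 := by
  set c : ℝ := p * π / L with hc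
  have hcne : c ≠ 0 := by
    have : (0:ℝ) < p := by exact_mod_cast hp
    positivity
  have hΦx₀ : Φ x₀ = 0 := by rw [hΦ]; rw [hΦ0]; ring
  -- sin zeros
  have sA : Real.sin (-c * (-(L/2)) + c * (L/2)) = 0 := by
    have : -c * (-(L/2)) + c * (L/2) = (p:ℝ) * π := by rw [hc]; field_simp; norm_num
    rw [this, Real.sin_nat_mul_pi]
  have sB : Real.sin (-c * x₀ + c * (L/2)) = 0 := by
    have : -c * x₀ + c * (L/2) = c * (L/2 - x₀) := by ring
    rw [this]; exact hΦ0
  have sC : Real.sin (-c * (L/2) + c * (L/2)) = 0 := by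
    simp
  -- integral of Φ² over a..b when endpoints are nodes
  have key : ∀ a b : ℝ, Real.sin (-c * a + c * (L/2)) = 0 →
      Real.sin (-c * b + c * (L/2)) = 0 →
      (∫ x in a..b, Φ x ^ 2) = (b - a) / L := by
    intro a b ha hb
    have hcong : ∀ x ∈ Set.uIcc a b, Φ x ^ 2
        = (2/L) * ((fun u => Real.sin u ^ 2) (-c * x + c * (L/2))) := by
      intro x _
      rw [hΦ]
      rw [mul_pow, Real.sq_sqrt (by positivity)]
      congr 2
      ring
    rw [intervalIntegral.integral_congr hcong, intervalIntegral.integral_const_mul,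
      intervalIntegral.integral_comp_mul_add (fun u => Real.sin u ^ 2) (neg_ne_zero.mpr hcne)]
    simp only [smul_eq_mul, integral_sin_sq, ha, hb]
    field_simp
    ring
  have int1 : (∫ x in (-(L/2))..x₀, Φ x ^ 2) = (x₀ + L/2) / L := by
    rw [key _ _ sA sB]; ring_nf
  have int2 : (∫ x in x₀..(L/2), Φ x ^ 2) = (L/2 - x₀) / L := by
    rw [key _ _ sB sC]
  -- continuity of Φ²
  have hΦcont : Continuous (fun x => Φ x ^ 2) := by
    have : Continuous Φ := by
      have : Φ = fun x => Real.sqrt (2/L) * Real.sin (c * (L/2 - x)) := funext hΦ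
      rw [this]; fun_prop
    fun_prop
  -- ΥΦ equals -√q Φ² on [-L/2, x₀] and (1/√q) Φ² on [x₀, L/2]
  have e1 : ∀ x ∈ Set.uIcc (-(L/2)) x₀, Υ x * Φ x = -Real.sqrt q * Φ x ^ 2 := by
    intro x hx
    rw [Set.uIcc_of_le (by linarith)] at hx
    rw [hΥ, if_pos hx.2]; ring
  have e2 : ∀ x ∈ Set.uIcc x₀ (L/2), Υ x * Φ x = (1/Real.sqrt q) * Φ x ^ 2 := by
    intro x hx
    rw [Set.uIcc_of_le (by linarith)] at hx
    rw [hΥ]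
    by_cases h : x ≤ x₀
    · have : x = x₀ := le_antisymm h hx.1
      rw [if_pos h, this, hΦx₀]; ring
    · rw [if_neg h]; ring
  have i1 : IntervalIntegrable (fun x => Υ x * Φ x) volume (-(L/2)) x₀ := by
    apply IntervalIntegrable.congr (f := fun x => -Real.sqrt q * Φ x ^ 2)
    · intro x hx
      exact (e1 x (Set.uIoc_subset_uIcc hx)).symm
    · exact (continuous_const.mul hΦcont).intervalIntegrable _ _
  have i2 : IntervalIntegrable (fun x => Υ x * Φ x) volume x₀ (L/2) := by
    apply IntervalIntegrable.congr (f := fun x => (1/Real.sqrt q) * Φ x ^ 2)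
    · intro x hx
      exact (e2 x (Set.uIoc_subset_uIcc hx)).symm
    · exact (continuous_const.mul hΦcont).intervalIntegrable _ _
  rw [← intervalIntegral.integral_add_adjacent_intervals i1 i2,
    intervalIntegral.integral_congr e1, intervalIntegral.integral_congr e2,
    intervalIntegral.integral_const_mul, intervalIntegral.integral_const_mul, int1, int2]
  -- final algebra
  have hA : (0:ℝ) < L/2 - x₀ := by linarith
  have hB : (0:ℝ) < L/2 + x₀ := by linarith
  have hA' : Real.sqrt (L/2 - x₀) ≠ 0 := by positivity
  have hB' : Real.sqrt (L/2 + x₀) ≠ 0 := by positivity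
  have hsq : Real.sqrt q = Real.sqrt (L/2 - x₀) / Real.sqrt (L/2 + x₀) := by
    rw [hq, Real.sqrt_div hA.le]
  have hBe : x₀ + L/2 = Real.sqrt (L/2 + x₀) ^ 2 := by
    rw [Real.sq_sqrt hB.le]; ring
  have hAe : L/2 - x₀ = Real.sqrt (L/2 - x₀) ^ 2 := by
    rw [Real.sq_sqrt hA.le]
  set sa := Real.sqrt (L/2 - x₀) with hsa
  set sb := Real.sqrt (L/2 + x₀) with hsb
  rw [hsq, hBe, hAe]
  field_simp
  ring
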